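/- Let T : ℤ¹¹ → ℤ¹¹ be the ℤ-linear map defined on the ordered basis (h, e₁₂₃, e₁₂₄, e₁₃₄, e₂₃₄, f₁₂, f₁₃, f₁₄, f₂₃, f₂₄, f₃₄) of the domain with values in the ordered basis (h̃₁₂, h̃₁₃, h̃₂₃, ẽ₁₃₅, ẽ₂₄₆, f̃₁₃, f̃₁₅, f̃₃₅, f̃₂₄, f̃₂₆, f̃₄₆) of the codomain by: T(h) = h̃₁₂ + h̃₁₃ + h̃₂₃ − ẽ₂₄₆, T(e₁₂₃) = h̃₁₃ + h̃₂₃ − ẽ₂₄₆, T(e₁₂₄) = h̃₁₂ + h̃₂₃ − ẽ₂₄₆, T(e₁₃₄) = h̃₁₂ + h̃₁₃ − ẽ₂₄₆, T(e₂₃₄) = ẽ₁₃₅, T(f₁₂) = h̃₂₃ − ẽ₂₄₆ + f̃₄₆, T(f₁₃) = h̃₁₃ − ẽ₂₄₆ + f̃₂₆, T(f₁₄) = h̃₁₂ − ẽ₂₄₆ + f̃₂₄, T(f₂₃) = f̃₁₃, T(f₂₄) = f̃₁₅, T(f₃₄) = f̃₃₅. Then T is a bijection (a ℤ-module isomorphism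 of ℤ¹¹). -/
import Mathlib


/-- Images of the ordered domain basis
`(h, e₁₂₃, e₁₂₄, e₁₃₄, e₂₃₄, f₁₂, f₁₃, f₁₄, f₂₃, f₂₄, f₃₄)` of `A₁(X_{Π₃}) ≅ ℤ¹¹`
under the pushforward `τ̂⋆`, written as coordinate vectors in the ordered
codomain basis `(h̃₁₂, h̃₁₃, h̃₂₃, ẽ₁₃₅, ẽ₂₄₆, f̃₁₃, f̃₁₅, f̃₃₅, f̃₂₄, f̃₂₆, f̃₄₆)`. -/
def tauImage : Fin 11 → Fin 11 → ℤ :=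
  ![![1, 1, 1, 0, -1, 0, 0, 0, 0, 0, 0],   -- T(h)    = h̃₁₂ + h̃₁₃ + h̃₂₃ − ẽ₂₄₆
    ![0, 1, 1, 0, -1, 0, 0, 0, 0, 0, 0],   -- T(e₁₂₃) = h̃₁₃ + h̃₂₃ − ẽ₂₄₆
    ![1, 0, 1, 0, -1, 0, 0, 0, 0, 0, 0],   -- T(e₁₂₄) = h̃₁₂ + h̃₂₃ − ẽ₂₄₆
    ![1, 1, 0, 0, -1, 0, 0, 0, 0, 0, 0],   -- T(e₁₃₄) = h̃₁₂ + h̃₁₃ − ẽ₂₄₆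
    ![0, 0, 0, 1, 0, 0, 0, 0, 0, 0, 0],    -- T(e₂₃₄) = ẽ₁₃₅
    ![0, 0, 1, 0, -1, 0, 0, 0, 0, 0, 1],   -- T(f₁₂)  = h̃₂₃ − ẽ₂₄₆ + f̃₄₆
    ![0, 1, 0, 0, -1, 0, 0, 0, 0, 1, 0],   -- T(f₁₃)  = h̃₁₃ − ẽ₂₄₆ + f̃₂₆
    ![1, 0, 0, 0, -1, 0, 0, 0, 1, 0, 0],   -- T(f₁₄)  = h̃₁₂ − ẽ₂₄₆ + f̃₂₄
    ![0, 0, 0, 0, 0, 1, 0, 0, 0, 0, 0],    -- T(f₂₃)  = f̃₁₃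
    ![0, 0, 0, 0, 0, 0, 1, 0, 0, 0, 0],    -- T(f₂₄)  = f̃₁₅
    ![0, 0, 0, 0, 0, 0, 0, 1, 0, 0, 0]]    -- T(f₃₄)  = f̃₃₅

/-- The pushforward `τ̂⋆` as the `ℤ`-linear extension of `tauImage`: a coefficient
vector `c` in the domain basis is sent to `∑ j, c j • tauImage j`. -/
def tauStar : (Fin 11 → ℤ) → (Fin 11 → ℤ) :=
  fun c => ∑ j, c j • tauImage j


def tauInvImage : Fin 11 → Fin 11 → ℤ :=
  ![![1, -1, 0, 0, 0, 0, 0, 0, 0, 0, 0],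
    ![1, 0, -1, 0, 0, 0, 0, 0, 0, 0, 0],
    ![1, 0, 0, -1, 0, 0, 0, 0, 0, 0, 0],
    ![0, 0, 0, 0, 1, 0, 0, 0, 0, 0, 0],
    ![2, -1, -1, -1, 0, 0, 0, 0, 0, 0, 0],
    ![0, 0, 0, 0, 0, 0, 0, 0, 1, 0, 0],
    ![0, 0, 0, 0, 0, 0, 0, 0, 0, 1, 0],
    ![0, 0, 0, 0, 0, 0, 0, 0, 0, 0, 1],
    ![1, 0, -1, -1, 0, 0, 0, 1, 0, 0, 0],
    ![1, -1, 0, -1, 0, 0, 1, 0, 0, 0, 0],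
    ![1, -1, -1, 0, 0, 1, 0, 0, 0, 0, 0]]

def A : Matrix (Fin 11) (Fin 11) ℤ := (Matrix.of tauImage).transpose
def B : Matrix (Fin 11) (Fin 11) ℤ := (Matrix.of tauInvImage).transpose

lemma AB : A * B = 1 := by decide
lemma BA : B * A = 1 := by decide

lemma tauStar_eq : tauStar = A.mulVec := by
  funext c i
  simp [tauStar, A, Matrix.mulVec, dotProduct, Finset.sum_apply, mul_comm]

/-- The pushforward `τ̂⋆` is a bijection (a `ℤ`-module isomorphism of `ℤ¹¹`). -/
theorem tauStar_bijective : Function.Bijective tauStar := by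
  rw [tauStar_eq]
  refine Function.bijective_iff_has_inverse.2 ⟨B.mulVec, fun v => ?_, fun v => ?_⟩
  · rw [Matrix.mulVec_mulVec, BA, Matrix.one_mulVec]
  · rw [Matrix.mulVec_mulVec, AB, Matrix.one_mulVec]
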